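/- The semigroup 𝒵^∞(S³ × S⁷ × S¹¹) is nontrivial: if α : S¹⁴ → S³ is an essential map of order 7 (a generator of the 7-primary component π₁₄(S³)_{(7)} ≅ ℤ/7), then the composite S³ × S⁷ × S¹¹ → S³ × S¹¹ → S¹⁴ → S³ → S³ × S⁷ × S¹¹ (first the projection forgetting the S⁷ factor, then the smash projection S³ × S¹¹ → S³ ∧ S¹¹ ≃ S¹⁴, then α, then the inclusion of the S³ factor) is essential and induces the trivial homomorphism on all homotopy groups. -/

import Mathlib

open scoped Manifold TensorProduct

noncomputable section

/-! ### Pointed spaces and based maps -/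

/-- A pointed topological space. -/
structure PtSpace : Type 1 where
  /-- underlying type -/
  carrier : Type
  [top : TopologicalSpace carrier]
  /-- base point -/
  pt : carrier

attribute [instance] PtSpace.top

instance : CoeSort PtSpace Type := ⟨PtSpace.carrier⟩

/-- The pointed space on a type with a chosen base point. -/
@[reducible] def PtSpace.of (G : Type) [TopologicalSpace G] (g : G) : PtSpace :=
  { carrier := G, pt := g }

/-- A based (pointed) continuous map. -/
@[ext] structure PtMap (X Y : PtSpace) where
  toCM : C(X, Y)
  map_pt : toCM X.pt = Y.pt

instance (X Y : PtSpace) : FunLike (PtMap X Y) X Y where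
  coe f := f.toCM
  coe_injective f g h := by cases f; cases g; simp_all [ContinuousMap.ext_iff, funext_iff]

namespace PtMap

/-- identity -/
def id (X : PtSpace) : PtMap X X := ⟨ContinuousMap.id _, rfl⟩

/-- composition of based maps -/
def comp {X Y Z : PtSpace} (g : PtMap Y Z) (f : PtMap X Y) : PtMap X Z :=
  ⟨g.toCM.comp f.toCM, by simp [f.map_pt, g.map_pt]⟩

/-- the constant based map -/
def const (X Y : PtSpace) : PtMap X Y := ⟨ContinuousMap.const _ Y.pt, rfl⟩

end PtMap

/-- Based homotopy: homotopy relative to the base point. -/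
def PtHomotopic {X Y : PtSpace} (f g : PtMap X Y) : Prop :=
  ContinuousMap.HomotopicRel f.toCM g.toCM {X.pt}

theorem PtHomotopic.refl {X Y : PtSpace} (f : PtMap X Y) : PtHomotopic f f :=
  ContinuousMap.HomotopicRel.refl _

theorem PtHomotopic.symm {X Y : PtSpace} {f g : PtMap X Y} (h : PtHomotopic f g) :
    PtHomotopic g f := ContinuousMap.HomotopicRel.symm h

theorem PtHomotopic.trans {X Y : PtSpace} {f g k : PtMap X Y} (h : PtHomotopic f g)
    (h' : PtHomotopic g k) : PtHomotopic f k := ContinuousMap.HomotopicRel.trans h h'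

/-- A based map is nullhomotopic if it is based homotopic to the constant map. -/
def PtNullhomotopic {X Y : PtSpace} (f : PtMap X Y) : Prop :=
  PtHomotopic f (PtMap.const X Y)

/-- The `n`-sphere as a pointed space. -/
def pSphere (n : ℕ) : PtSpace :=
  { carrier := Metric.sphere (0 : EuclideanSpace ℝ (Fin (n + 1))) 1
    pt := ⟨EuclideanSpace.single 0 1, by simp [EuclideanSpace.norm_single]⟩ }

/-! ### The semigroups `𝒵ⁿ(X,Y)` and their nilpotency -/

/-- `f ∈ 𝒵ⁿ(X, Y)` : `f` induces the trivial homomorphism on homotopy groups `π_i`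
for all `1 ≤ i ≤ n`, expressed by the condition that `f ∘ g` is (based) nullhomotopic
for every based map `g : Sⁱ → X`. -/
def zClass (n : ℕ∞) {X Y : PtSpace} (f : PtMap X Y) : Prop :=
  ∀ i : ℕ, 1 ≤ i → (i : ℕ∞) ≤ n → ∀ g : PtMap (pSphere i) X, PtNullhomotopic (f.comp g)

/-- The semigroup `𝒵ⁿ(X)` (as a set of based self-maps; the semigroup operation is
composition, which is compatible with `compList` below). -/
def ZSet (n : ℕ∞) (X : PtSpace) : Set (PtMap X X) := {f | zClass n f}

/-- iterated composite of a list of self-maps -/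
def compList {X : PtSpace} : List (PtMap X X) → PtMap X X
  | [] => PtMap.id X
  | f :: l => f.comp (compList l)

/-- The set of `t ≥ 1` such that every composite of `t` elements of `𝒵ⁿ(X)` is
nullhomotopic. -/
def nilSet (n : ℕ∞) (X : PtSpace) : Set ℕ :=
  {t | 1 ≤ t ∧ ∀ l : List (PtMap X X), l.length = t →
    (∀ f ∈ l, f ∈ ZSet n X) → PtNullhomotopic (compList l)}

/-- The nilpotency of the semigroup `𝒵ⁿ(X)`: the least `t ≥ 1` such that all composites
of `t` elements of `𝒵ⁿ(X)` are nullhomotopic (`⊤` if there is no such `t`).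
`tNil n X` for `n = dim X` is `t(X)`, and `tNil ⊤ X` is `t_∞(X)`. -/
def tNil (n : ℕ∞) (X : PtSpace) : ℕ∞ :=
  sInf ((Nat.cast : ℕ → ℕ∞) '' nilSet n X)

/-! ### Homotopy classes -/

/-- based homotopy as a setoid -/
def ptSetoid (X Y : PtSpace) : Setoid (PtMap X Y) where
  r := PtHomotopic
  iseqv := ⟨PtHomotopic.refl, PtHomotopic.symm, PtHomotopic.trans⟩

/-- `[X, Y]`, the set of based homotopy classes of based maps `X → Y`. -/
def PtCls (X Y : PtSpace) : Type := Quotient (ptSetoid X Y)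

/-- the homotopy class of a based map -/
def PtMap.cls {X Y : PtSpace} (f : PtMap X Y) : PtCls X Y := Quotient.mk (ptSetoid X Y) f

/-- `𝒵ⁿ(X)` as a set of homotopy classes. -/
def ZCls (n : ℕ∞) (X : PtSpace) : Set (PtCls X X) := PtMap.cls '' ZSet n X

/-- Right whiskering of a based homotopy. -/
theorem PtHomotopic.compRight {X Y Z : PtSpace} {f g : PtMap Y Z} (h : PtHomotopic f g)
    (q : PtMap X Y) : PtHomotopic (f.comp q) (g.comp q) := by
  obtain ⟨H⟩ := h
  exact ⟨{ toFun := fun p => H (p.1, q.toCM p.2)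
           continuous_toFun := H.continuous.comp
             (continuous_fst.prodMk (q.toCM.continuous.comp continuous_snd))
           map_zero_left := fun x => by simp [PtMap.comp]
           map_one_left := fun x => by simp [PtMap.comp]
           prop' := fun t x hx => by
             have hx' : x = X.pt := hx
             subst hx'
             show H (t, q.toCM X.pt) = (f.comp q).toCM X.pt
             rw [q.map_pt]
             show H (t, Y.pt) = f.toCM (q.toCM X.pt)
             rw [q.map_pt]
             exact H.eq_fst t rfl }⟩

/-- Left whiskering of a based homotopy. -/
theorem PtHomotopic.compLeft {X Y Z : PtSpace} {f g : PtMap X Y} (h : PtHomotopic f g)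
    (p : PtMap Y Z) : PtHomotopic (p.comp f) (p.comp g) :=
  h.map fun H => H.compContinuousMap p.toCM

/-- precomposition on homotopy classes, `q^* : [Y, Z] → [X, Z]` -/
def PtCls.precomp {X Y : PtSpace} (q : PtMap X Y) {Z : PtSpace} :
    PtCls Y Z → PtCls X Z :=
  Quotient.map (fun f => f.comp q) (fun _ _ h => h.compRight q)

/-- postcomposition on homotopy classes, `p_* : [X, Y] → [X, Z]` -/
def PtCls.postcomp {Y Z : PtSpace} (p : PtMap Y Z) {X : PtSpace} :
    PtCls X Y → PtCls X Z :=
  Quotient.map (fun f => p.comp f) (fun _ _ h => h.compLeft p)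


/-! ### Further constructions on pointed spaces -/

/-- product of pointed spaces -/
def PtSpace.prod (X Y : PtSpace) : PtSpace :=
  { carrier := X.carrier × Y.carrier, pt := (X.pt, Y.pt) }

/-- the space obtained from `X` by collapsing a subset `A` to a point -/
def PtSpace.collapse (X : PtSpace) (A : Set X.carrier) : PtSpace :=
  { carrier := Quot (fun a b : X.carrier => a ∈ A ∧ b ∈ A)
    pt := Quot.mk _ X.pt }

/-- the collapsing map `X → X/A` -/
def PtSpace.collapseMap (X : PtSpace) (A : Set X.carrier) : PtMap X (X.collapse A) :=
  ⟨⟨Quot.mk _, continuous_quot_mk⟩, rfl⟩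

/-- the wedge `X ∨ Y` -/
def ptWedge (X Y : PtSpace) : PtSpace :=
  { carrier := Quot (fun a b : X.carrier ⊕ Y.carrier =>
      (a = Sum.inl X.pt ∨ a = Sum.inr Y.pt) ∧ (b = Sum.inl X.pt ∨ b = Sum.inr Y.pt))
    pt := Quot.mk _ (Sum.inl X.pt) }

/-- projection of the wedge onto its first factor -/
def ptWedgeProjLeft (X Y : PtSpace) : PtMap (ptWedge X Y) X :=
  ⟨⟨Quot.lift (Sum.elim id fun _ => X.pt) (by
      rintro a b ⟨ha, hb⟩
      rcases ha with rfl | rfl <;> rcases hb with rfl | rfl <;> rfl),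
    continuous_quot_lift _ (Continuous.sumElim continuous_id continuous_const)⟩, rfl⟩

/-- the smash product `X ∧ Y`, the quotient of `X × Y` by the wedge -/
def ptSmash (X Y : PtSpace) : PtSpace :=
  { carrier := Quot (fun a b : X.carrier × Y.carrier =>
      (a.1 = X.pt ∨ a.2 = Y.pt) ∧ (b.1 = X.pt ∨ b.2 = Y.pt))
    pt := Quot.mk _ (X.pt, Y.pt) }

/-- the projection `X × Y → X ∧ Y` -/
def ptSmashProj (X Y : PtSpace) : PtMap (X.prod Y) (ptSmash X Y) :=
  ⟨⟨Quot.mk _, continuous_quot_mk⟩, rfl⟩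

/-- the reduced suspension `ΣX` -/
def ptSusp (X : PtSpace) : PtSpace :=
  { carrier := Quot (fun a b : X.carrier × unitInterval =>
      (a.2 = 0 ∨ a.2 = 1 ∨ a.1 = X.pt) ∧ (b.2 = 0 ∨ b.2 = 1 ∨ b.1 = X.pt))
    pt := Quot.mk _ (X.pt, 0) }

/-- the reduced mapping cone of `f : A → B` -/
def ptCone {A B : PtSpace} (f : PtMap A B) : PtSpace :=
  { carrier := Quot (fun x y : (A.carrier × unitInterval) ⊕ B.carrier =>
      (∃ a : A.carrier, x = Sum.inl (a, 1) ∧ y = Sum.inr (f.toCM a)) ∨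
      ((∃ a t, x = Sum.inl (a, t) ∧ (t = 0 ∨ a = A.pt)) ∧
        ∃ a t, y = Sum.inl (a, t) ∧ (t = 0 ∨ a = A.pt)))
    pt := Quot.mk _ (Sum.inr B.pt) }

/-- `f : X → Y` is a based homotopy equivalence -/
def IsPtHomotopyEquiv {X Y : PtSpace} (f : PtMap X Y) : Prop :=
  ∃ g : PtMap Y X, PtHomotopic (g.comp f) (PtMap.id X) ∧ PtHomotopic (f.comp g) (PtMap.id Y)

/-- `X` and `Y` are based homotopy equivalent -/
def PtHomotopyEquiv (X Y : PtSpace) : Prop :=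
  ∃ f : PtMap X Y, IsPtHomotopyEquiv f

/-! ### Pointwise group structure on `[X, G]` for a topological group `G` -/

section PtGrp

variable {X : PtSpace} {G : Type} [TopologicalSpace G] [Group G] [IsTopologicalGroup G]

/-- pointwise product of based maps into a topological group (based at the identity) -/
def PtMap.mul (f g : PtMap X (PtSpace.of G 1)) : PtMap X (PtSpace.of G 1) :=
  ⟨⟨fun x => f.toCM x * g.toCM x, f.toCM.continuous.mul g.toCM.continuous⟩, by
    show f.toCM X.pt * g.toCM X.pt = 1
    rw [f.map_pt, g.map_pt]; exact mul_one 1⟩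

/-- pointwise inverse -/
def PtMap.inv (f : PtMap X (PtSpace.of G 1)) : PtMap X (PtSpace.of G 1) :=
  ⟨⟨fun x => (f.toCM x)⁻¹, f.toCM.continuous.inv⟩, by
    show (f.toCM X.pt)⁻¹ = 1
    rw [f.map_pt]; exact inv_one⟩

/-- pointwise power -/
def PtMap.npow (f : PtMap X (PtSpace.of G 1)) (k : ℕ) : PtMap X (PtSpace.of G 1) :=
  ⟨⟨fun x => (f.toCM x) ^ k, f.toCM.continuous.pow k⟩, by
    show (f.toCM X.pt) ^ k = 1
    rw [f.map_pt]; exact one_pow k⟩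

theorem PtHomotopic.mul {f f' g g' : PtMap X (PtSpace.of G 1)} (h₁ : PtHomotopic f f')
    (h₂ : PtHomotopic g g') : PtHomotopic (f.mul g) (f'.mul g') := by
  obtain ⟨H₁⟩ := h₁; obtain ⟨H₂⟩ := h₂
  exact ⟨{ toFun := fun p => H₁ p * H₂ p
           continuous_toFun := H₁.continuous.mul H₂.continuous
           map_zero_left := fun x => by simp [PtMap.mul]
           map_one_left := fun x => by simp [PtMap.mul]
           prop' := fun t x hx => by
             have hx' : x = X.pt := hx
             subst hx'
             show H₁ (t, X.pt) * H₂ (t, X.pt) = (f.mul g).toCM X.pt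
             rw [H₁.eq_fst t rfl, H₂.eq_fst t rfl]; rfl }⟩

theorem PtHomotopic.inv {f f' : PtMap X (PtSpace.of G 1)} (h : PtHomotopic f f') :
    PtHomotopic f.inv f'.inv := by
  obtain ⟨H⟩ := h
  exact ⟨{ toFun := fun p => (H p)⁻¹
           continuous_toFun := H.continuous.inv
           map_zero_left := fun x => by simp [PtMap.inv]
           map_one_left := fun x => by simp [PtMap.inv]
           prop' := fun t x hx => by
             have hx' : x = X.pt := hx
             subst hx'
             show (H (t, X.pt))⁻¹ = f.inv.toCM X.pt
             rw [H.eq_fst t rfl]; rfl }⟩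

instance : Mul (PtCls X (PtSpace.of G 1)) :=
  ⟨Quotient.map₂ PtMap.mul fun _ _ h₁ _ _ h₂ => h₁.mul h₂⟩

instance : One (PtCls X (PtSpace.of G 1)) := ⟨(PtMap.const X (PtSpace.of G 1)).cls⟩

instance : Inv (PtCls X (PtSpace.of G 1)) :=
  ⟨Quotient.map PtMap.inv fun _ _ h => h.inv⟩

/-- `[X, G]` is a group under pointwise multiplication. -/
instance : Group (PtCls X (PtSpace.of G 1)) where
  mul_assoc a b c := by
    induction a using Quotient.inductionOn with | _ a =>
    induction b using Quotient.inductionOn with | _ b =>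
    induction c using Quotient.inductionOn with | _ c =>
    exact congrArg (Quotient.mk _) (by
      apply PtMap.ext; exact ContinuousMap.ext fun x => mul_assoc _ _ _)
  one_mul a := by
    induction a using Quotient.inductionOn with | _ a =>
    exact congrArg (Quotient.mk _) (by
      apply PtMap.ext; exact ContinuousMap.ext fun x => one_mul _)
  mul_one a := by
    induction a using Quotient.inductionOn with | _ a =>
    exact congrArg (Quotient.mk _) (by
      apply PtMap.ext; exact ContinuousMap.ext fun x => mul_one _)
  inv_mul_cancel a := by
    induction a using Quotient.inductionOn with | _ a =>
    exact congrArg (Quotient.mk _) (by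
      apply PtMap.ext; exact ContinuousMap.ext fun x => inv_mul_cancel _)

end PtGrp

/-! ### Finite CW structures -/

/-- A finite CW presentation of a space: finitely many cells with characteristic maps,
whose open cells partition the space, each cell boundary landing in cells of strictly
smaller dimension. Together with compactness and Hausdorffness (see `IsFiniteCW`)
this is exactly the classical notion of a finite CW complex. -/
structure FiniteCWPres (X : PtSpace) where
  ι : Type
  [fin : Finite ι]
  cdim : ι → ℕ
  char : ∀ j, C(Metric.closedBall (0 : EuclideanSpace ℝ (Fin (cdim j))) 1, X.carrier)
  injOn : ∀ j, Set.InjOn (char j) {v | ‖(v : EuclideanSpace ℝ (Fin (cdim j)))‖ < 1}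
  disjoint : ∀ j k, j ≠ k → Disjoint
    (char j '' {v | ‖(v : EuclideanSpace ℝ (Fin (cdim j)))‖ < 1})
    (char k '' {v | ‖(v : EuclideanSpace ℝ (Fin (cdim k)))‖ < 1})
  cover : ∀ x : X.carrier, ∃ j, ∃ v : Metric.closedBall (0 : EuclideanSpace ℝ (Fin (cdim j))) 1,
    ‖(v : EuclideanSpace ℝ (Fin (cdim j)))‖ < 1 ∧ char j v = x
  boundary : ∀ j, ∀ v : Metric.closedBall (0 : EuclideanSpace ℝ (Fin (cdim j))) 1,
    ‖(v : EuclideanSpace ℝ (Fin (cdim j)))‖ = 1 →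
    ∃ k, ∃ w : Metric.closedBall (0 : EuclideanSpace ℝ (Fin (cdim k))) 1,
      cdim k < cdim j ∧ ‖(w : EuclideanSpace ℝ (Fin (cdim k)))‖ < 1 ∧ char k w = char j v

/-- `X` is a finite CW complex of dimension `d`. -/
def IsFiniteCW (X : PtSpace) (d : ℕ) : Prop :=
  CompactSpace X.carrier ∧ T2Space X.carrier ∧
    ∃ P : FiniteCWPres X, (∀ j, P.cdim j ≤ d) ∧ ∃ j, P.cdim j = d

/-! ### Nilpotent spaces -/

/-- Two homotopy classes in `π_n(X, x)` are freely related if they have representatives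
that are freely homotopic (i.e. homotopic through maps collapsing the cube boundary to a
single, possibly moving, point).  This holds for `a` and `b` iff `b = γ · a` for some `γ`
in the fundamental group, so it encodes the orbits of the `π₁`-action on `π_n`. -/
def FreelyRelated (n : ℕ) (X : Type) [TopologicalSpace X] (x : X)
    (A B : HomotopyGroup (Fin n) X x) : Prop :=
  ∃ p q : GenLoop (Fin n) X x,
    Quotient.mk (GenLoop.Homotopic.setoid (Fin n) x) p = A ∧
    Quotient.mk (GenLoop.Homotopic.setoid (Fin n) x) q = B ∧
    ∃ H : ContinuousMap.Homotopy p.1 q.1,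
      ∀ (t : unitInterval) y z, y ∈ Cube.boundary (Fin n) → z ∈ Cube.boundary (Fin n) →
        H (t, y) = H (t, z)

/-- The lower central series of the action of the fundamental group on `π_{n+2}(X, x)`:
`Γ⁰ = π_{n+2}` and `Γ^{k+1}` is generated by the elements `(γ · a) * a⁻¹` with `a ∈ Γᵏ`. -/
def actionLowerCentralSeries (n : ℕ) (X : Type) [TopologicalSpace X] (x : X) :
    ℕ → Subgroup (HomotopyGroup (Fin (n + 2)) X x)
  | 0 => ⊤
  | k + 1 => Subgroup.closure
      {g | ∃ a b, a ∈ actionLowerCentralSeries n X x k ∧ FreelyRelated (n + 2) X x a b ∧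
        g = b * a⁻¹}

/-- A nilpotent space: path-connected, with nilpotent fundamental group acting
nilpotently on all higher homotopy groups. -/
def IsNilpotentSpace (X : PtSpace) : Prop :=
  PathConnectedSpace X.carrier ∧
  Group.IsNilpotent (FundamentalGroup X.carrier X.pt) ∧
  ∀ n : ℕ, ∃ k, actionLowerCentralSeries n X.carrier X.pt k = ⊥

/-! ### Localization of spaces -/

/-- All homotopy groups of `Z` are `P`-local (`P` a set of primes): for every prime
`q ∉ P` the `q`-th power map on `π_n(Z)` is bijective. -/
def IsPLocalSpace (P : Set ℕ) (Z : PtSpace) : Prop :=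
  ∀ n : ℕ, ∀ q : ℕ, q.Prime → q ∉ P →
    Function.Bijective fun g : HomotopyGroup (Fin (n + 1)) Z.carrier Z.pt => g ^ q

/-- `e : X → Y` is a `P`-localization of `X` (`P` a set of primes): `Y` is `P`-local and
`e` is universal (up to homotopy) among based maps to `P`-local spaces.  For `P = {p}`
this is localization at the prime `p`; for `P = ∅` it is rationalization. -/
def IsPLocalization (P : Set ℕ) {X Y : PtSpace} (e : PtMap X Y) : Prop :=
  IsPLocalSpace P Y ∧
  ∀ Z : PtSpace, IsPLocalSpace P Z →
    (∀ g : PtMap X Z, ∃ h : PtMap Y Z, PtHomotopic (h.comp e) g) ∧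
    ∀ h h' : PtMap Y Z, PtHomotopic (h.comp e) (h'.comp e) → PtHomotopic h h'

/-! ### Misc notions -/

/-- `G` contains a torus of dimension `k` (a continuously and injectively embedded copy
of `(ℝ/ℤ)ᵏ`).  For a compact Lie group, the rank is the largest such `k`. -/
def HasTorus (G : Type) [TopologicalSpace G] [Group G] (k : ℕ) : Prop :=
  ∃ f : (Fin k → AddCircle (1 : ℝ)) → G,
    Continuous f ∧ Function.Injective f ∧ ∀ a b, f (a + b) = f a * f b

/-- `q : G → Sᴺ` is the pinch map onto the top cell: it collapses a proper closed subset
`C` (the lower skeleton) containing the base point to the base point of the sphere and is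
injective on the complement, an open `N`-cell, which maps onto the complement of the base
point. -/
def IsCellPinch {G : PtSpace} {N : ℕ} (q : PtMap G (pSphere N)) : Prop :=
  Topology.IsQuotientMap q.toCM ∧
  ∃ C : Set G.carrier, IsClosed C ∧ G.pt ∈ C ∧
    (∀ x ∈ C, q.toCM x = (pSphere N).pt) ∧
    Set.InjOn q.toCM Cᶜ ∧
    (∀ x ∈ Cᶜ, q.toCM x ≠ (pSphere N).pt) ∧
    Nonempty (Homeomorph (↥(Cᶜ)) (↥(Metric.ball (0 : EuclideanSpace ℝ (Fin N)) 1)))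

/-- the total dimension of the rational homotopy of `X` (for a `1`-connected finite
`H`-space this is its rank) -/
def ratHomotopyRank (X : PtSpace) : ℕ :=
  ∑ᶠ n : ℕ,
    Module.finrank ℚ
      (ℚ ⊗[ℤ] Additive (HomotopyGroup (Fin (n + 2)) X.carrier X.pt))

/-- `E` is an Eilenberg–MacLane space `K(ℚ, m)` (`m ≥ 1`): path-connected, `π_m(E) ≅ ℚ`
and all other homotopy groups vanish. -/
def IsEMRat (E : PtSpace) (m : ℕ) : Prop :=
  1 ≤ m ∧
  (∀ i : ℕ, 1 ≤ i → i ≠ m → ∀ g : PtMap (pSphere i) E, PtNullhomotopic g) ∧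
  PathConnectedSpace E.carrier ∧
  Nonempty (HomotopyGroup (Fin (m - 1 + 1)) E.carrier E.pt ≃* Multiplicative ℚ)

/-- `S³`, realized as the unit quaternions (a topological group) -/
abbrev qS3 : PtSpace := PtSpace.of (Metric.sphere (0 : Quaternion ℝ) 1) 1

/-- `S³ × S⁷ × S¹¹` -/
abbrev X15 : PtSpace := PtSpace.prod qS3 (PtSpace.prod (pSphere 7) (pSphere 11))

/-- the projection `S³ × S⁷ × S¹¹ → S³ × S¹¹` forgetting the `S⁷` factor -/
def projForget : PtMap X15 (PtSpace.prod qS3 (pSphere 11)) :=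
  ⟨⟨fun p => (p.1, p.2.2), by fun_prop⟩, rfl⟩

/-- the inclusion `S³ → S³ × S⁷ × S¹¹` of the first factor -/
def inclS3 : PtMap qS3 X15 :=
  ⟨⟨fun s => (s, ((pSphere 7).pt, (pSphere 11).pt)), by fun_prop⟩, rfl⟩

/-! ### Auxiliary lemmas for the proof of Statement 15 -/

section AuxStmt15

open Function

/-- Postcomposition preserves (based) nullhomotopy. -/
theorem PtNullhomotopic.compLeft' {X Y Z : PtSpace} {f : PtMap X Y} (h : PtNullhomotopic f)
    (p : PtMap Y Z) : PtNullhomotopic (p.comp f) := by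
  have h2 := PtHomotopic.compLeft h p
  have h3 : p.comp (PtMap.const X Y) = PtMap.const X Z :=
    PtMap.ext (ContinuousMap.ext fun x => p.map_pt)
  rwa [h3] at h2

/-- Characterization of equality in the smash-type quotient. -/
theorem smash_quot_eq {A B : Type} {σ : A} {τ : B} {z z' : A × B}
    (h : Quot.mk (fun a b : A × B => (a.1 = σ ∨ a.2 = τ) ∧ (b.1 = σ ∨ b.2 = τ)) z
       = Quot.mk (fun a b : A × B => (a.1 = σ ∨ a.2 = τ) ∧ (b.1 = σ ∨ b.2 = τ)) z') :
    z = z' ∨ ((z.1 = σ ∨ z.2 = τ) ∧ (z'.1 = σ ∨ z'.2 = τ)) := by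
  have h' := Quot.eq.1 h
  clear h
  induction h' with
  | rel a b hab => exact Or.inr hab
  | refl a => exact Or.inl rfl
  | symm a b _ ih =>
      rcases ih with rfl | ⟨h1, h2⟩
      · exact Or.inl rfl
      · exact Or.inr ⟨h2, h1⟩
  | trans a b c _ _ ih1 ih2 =>
      rcases ih1 with rfl | ⟨h1, h2⟩
      · exact ih2
      · rcases ih2 with rfl | ⟨h3, h4⟩
        · exact Or.inr ⟨h1, h2⟩
        · exact Or.inr ⟨h1, h4⟩

theorem mem_sphere_normalize {n : ℕ} {v : EuclideanSpace ℝ (Fin n)} (hv : v ≠ 0) :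
    ‖v‖⁻¹ • v ∈ Metric.sphere (0 : EuclideanSpace ℝ (Fin n)) 1 := by
  rw [mem_sphere_zero_iff_norm, norm_smul, norm_inv, norm_norm]
  exact inv_mul_cancel₀ (norm_ne_zero_iff.2 hv)

theorem seg_ne_zero {n : ℕ} {x w : EuclideanSpace ℝ (Fin n)} (hx : ‖x‖ = 1) (hw : ‖w‖ = 1)
    {s : ℝ} (h0 : 0 ≤ s) (h1 : s ≤ 1) (hne : x = -w → s = 0) :
    (1 - s) • x + s • w ≠ 0 := by
  intro h
  have h2 : (1 - s) • x = s • (-w) := by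
    rw [smul_neg]
    have := eq_neg_of_add_eq_zero_left h
    simpa using this
  have h3 : (1 - s) * 1 = s * 1 := by
    have h4 := congrArg norm h2
    rwa [norm_smul, norm_smul, norm_neg, hx, hw, Real.norm_eq_abs, Real.norm_eq_abs,
      abs_of_nonneg (by linarith), abs_of_nonneg h0] at h4
  have hs : s = 1 / 2 := by linarith
  have h5 : (1 - s) • x = (1 - s) • (-w) := by
    rw [h2, hs]; norm_num
  have h6 : x = -w := smul_right_injective _ (by rw [hs]; norm_num : (1:ℝ) - s ≠ 0) h5
  have := hne h6
  rw [this] at hs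
  norm_num at hs

theorem norm_single_combo {n : ℕ} {iA iB : Fin n} (hAB : iA ≠ iB) (c s : ℝ)
    (h : c ^ 2 + s ^ 2 = 1) :
    c • EuclideanSpace.single iA (1 : ℝ) + s • EuclideanSpace.single iB (1 : ℝ) ∈
      Metric.sphere (0 : EuclideanSpace ℝ (Fin n)) 1 := by
  rw [mem_sphere_zero_iff_norm, EuclideanSpace.norm_eq]
  have key : ∀ j : Fin n,
      ‖(c • EuclideanSpace.single iA (1 : ℝ) + s • EuclideanSpace.single iB (1 : ℝ)) j‖ ^ 2
        = (if j = iA then c ^ 2 else 0) + (if j = iB then s ^ 2 else 0) := by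
    intro j
    by_cases h1 : j = iA <;> by_cases h2 : j = iB
    · exact absurd (h1 ▸ h2 ▸ rfl : iA = iB) hAB
    · simp [h1, h2, hAB, PiLp.add_apply, PiLp.smul_apply, EuclideanSpace.single_apply,
        Real.norm_eq_abs, sq_abs, Ne.symm hAB]
    · simp [h1, h2, hAB, PiLp.add_apply, PiLp.smul_apply, EuclideanSpace.single_apply,
        Real.norm_eq_abs, sq_abs, Ne.symm hAB]
    · simp [h1, h2, hAB, PiLp.add_apply, PiLp.smul_apply, EuclideanSpace.single_apply,
        Real.norm_eq_abs, sq_abs, Ne.symm hAB]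
  calc Real.sqrt (∑ j, ‖(c • EuclideanSpace.single iA (1 : ℝ)
          + s • EuclideanSpace.single iB (1 : ℝ)) j‖ ^ 2)
      = Real.sqrt (∑ j : Fin n,
          ((if j = iA then c ^ 2 else 0) + (if j = iB then s ^ 2 else 0))) := by
        rw [Finset.sum_congr rfl fun j _ => key j]
    _ = 1 := by
        rw [Finset.sum_add_distrib]
        simp only [Finset.sum_ite_eq', Finset.mem_univ, if_true]
        rw [h, Real.sqrt_one]

end AuxStmt15
section Key1

open Function

private abbrev P15 : Type := qS3.carrier × (pSphere 11).carrier

/-- The smash relation used in `ptSmash qS3 (pSphere 11)`. -/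
private abbrev smashRel : P15 → P15 → Prop :=
  fun a b => (a.1 = qS3.pt ∨ a.2 = (pSphere 11).pt) ∧ (b.1 = qS3.pt ∨ b.2 = (pSphere 11).pt)

private theorem quot_wedge_left (y : (pSphere 11).carrier) :
    (Quot.mk smashRel (qS3.pt, y) : (ptSmash qS3 (pSphere 11)).carrier)
      = (ptSmash qS3 (pSphere 11)).pt :=
  Quot.sound ⟨Or.inl rfl, Or.inl rfl⟩

private theorem quot_wedge_right (s : qS3.carrier) :
    (Quot.mk smashRel (s, (pSphere 11).pt) : (ptSmash qS3 (pSphere 11)).carrier)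
      = (ptSmash qS3 (pSphere 11)).pt :=
  Quot.sound ⟨Or.inr rfl, Or.inl rfl⟩

set_option maxHeartbeats 1000000 in
set_option synthInstance.maxHeartbeats 400000 in
theorem key1 (α : PtMap (pSphere 14) qS3)
    (e : (ptSmash qS3 (pSphere 11)).carrier ≃ₜ (pSphere 14).carrier)
    (he : e (ptSmash qS3 (pSphere 11)).pt = (pSphere 14).pt)
    (hα : ¬ PtNullhomotopic α) {F : PtMap X15 X15}
    (hFval : ∀ x : X15.carrier,
      (F.toCM x).1 = α.toCM (e (Quot.mk smashRel (x.1, x.2.2)))) :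
    ¬ PtNullhomotopic F := by
  intro h
  obtain ⟨H⟩ := h
  -- the sliced homotopy, first coordinate only
  set K : unitInterval × P15 → qS3.carrier :=
    fun p => (H (p.1, (p.2.1, ((pSphere 7).pt, p.2.2)))).1 with hK
  -- the corrected homotopy, constant on the wedge
  set L : unitInterval × P15 → qS3.carrier :=
    fun p => (K (p.1, (qS3.pt, p.2.2)))⁻¹ * K p * (K (p.1, (p.2.1, (pSphere 11).pt)))⁻¹ with hL
  have hKbase : ∀ t : unitInterval, K (t, (qS3.pt, (pSphere 11).pt)) = 1 := by
    intro t
    have h1 : H (t, X15.pt) = F.toCM X15.pt := H.eq_fst t rfl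
    show (H (t, X15.pt)).1 = 1
    rw [h1, F.map_pt]
    rfl
  have hK1 : ∀ z : P15, K (1, z) = 1 := by
    intro z
    exact congrArg Prod.fst (H.apply_one (z.1, ((pSphere 7).pt, z.2)))
  have hK0 : ∀ z : P15, K (0, z) = α.toCM (e (Quot.mk smashRel (z.1, z.2))) := by
    intro z
    exact (congrArg Prod.fst (H.apply_zero (z.1, ((pSphere 7).pt, z.2)))).trans (hFval _)
  have hwedge : ∀ (t : unitInterval) (z : P15),
      (z.1 = qS3.pt ∨ z.2 = (pSphere 11).pt) → L (t, z) = 1 := by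
    intro t z hz
    obtain ⟨z1, z2⟩ := z
    rcases hz with h1 | h1
    · simp only at h1
      subst h1
      show (K (t, (qS3.pt, z2)))⁻¹ * K (t, (qS3.pt, z2))
          * (K (t, (qS3.pt, (pSphere 11).pt)))⁻¹ = 1
      rw [inv_mul_cancel, hKbase t, inv_one, mul_one]
    · simp only at h1
      subst h1
      show (K (t, (qS3.pt, (pSphere 11).pt)))⁻¹ * K (t, (z1, (pSphere 11).pt))
          * (K (t, (z1, (pSphere 11).pt)))⁻¹ = 1
      rw [hKbase t, inv_one, one_mul, mul_inv_cancel]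
  have hL0 : ∀ z : P15, L (0, z) = α.toCM (e (Quot.mk smashRel z)) := by
    intro z
    show (K (0, (qS3.pt, z.2)))⁻¹ * K (0, z) * (K (0, (z.1, (pSphere 11).pt)))⁻¹
        = α.toCM (e (Quot.mk smashRel z))
    rw [hK0, hK0, hK0]
    show (α.toCM (e (Quot.mk smashRel (qS3.pt, z.2))))⁻¹
        * α.toCM (e (Quot.mk smashRel (z.1, z.2)))
        * (α.toCM (e (Quot.mk smashRel (z.1, (pSphere 11).pt))))⁻¹ = _
    rw [quot_wedge_left, quot_wedge_right, he, α.map_pt]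
    show (1 : qS3.carrier)⁻¹ * _ * (1 : qS3.carrier)⁻¹ = _
    rw [inv_one, one_mul, mul_one]
  have hL1 : ∀ z : P15, L (1, z) = 1 := by
    intro z
    show (K (1, (qS3.pt, z.2)))⁻¹ * K (1, z) * (K (1, (z.1, (pSphere 11).pt)))⁻¹ = 1
    rw [hK1, hK1, hK1, inv_one, one_mul, mul_one]
  -- descend along the quotient map to the 14-sphere
  set Q : P15 → (pSphere 14).carrier := fun z => e (Quot.mk smashRel z) with hQ
  have hQs : Surjective Q := fun y => by
    obtain ⟨q, hq⟩ := e.surjective y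
    obtain ⟨z, hz⟩ := Quot.exists_rep q
    exact ⟨z, by rw [hQ]; show e (Quot.mk smashRel z) = y; rw [hz, hq]⟩
  have hfib : ∀ z z' : P15, Q z = Q z' → ∀ t, L (t, z) = L (t, z') := by
    intro z z' hzz t
    have hq : Quot.mk smashRel z = Quot.mk smashRel z' := e.injective hzz
    rcases smash_quot_eq hq with rfl | ⟨h1, h2⟩
    · rfl
    · rw [hwedge t z h1, hwedge t z' h2]
  set N : unitInterval × (pSphere 14).carrier → qS3.carrier :=
    fun p => L (p.1, surjInv hQs p.2) with hN
  have hNQ : ∀ (t : unitInterval) (z : P15), N (t, Q z) = L (t, z) := fun t z =>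
    hfib _ _ (surjInv_eq hQs (Q z)) t
  have hKc : Continuous K :=
    (H.continuous.comp (continuous_fst.prodMk
      (((continuous_fst.comp continuous_snd)).prodMk
        (continuous_const.prodMk (continuous_snd.comp continuous_snd))))).fst
  have hLc : Continuous L :=
    (((hKc.comp (continuous_fst.prodMk
        (continuous_const.prodMk (continuous_snd.comp continuous_snd)))).inv.mul
      hKc).mul
      (hKc.comp (continuous_fst.prodMk
        ((continuous_fst.comp continuous_snd).prodMk continuous_const))).inv)
  have hQc : Continuous Q := e.continuous.comp continuous_quot_mk
  haveI : CompactSpace ((pSphere 11).carrier) :=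
    inferInstanceAs (CompactSpace (Metric.sphere (0 : EuclideanSpace ℝ (Fin (11 + 1))) 1))
  haveI : T2Space ((pSphere 14).carrier) :=
    inferInstanceAs (T2Space (Metric.sphere (0 : EuclideanSpace ℝ (Fin (14 + 1))) 1))
  have hNc : Continuous N := by
    have hmap : Continuous (Prod.map (fun t : unitInterval => t) Q) :=
      continuous_id.prodMap hQc
    have hqQ : Topology.IsQuotientMap (Prod.map (fun t : unitInterval => t) Q) :=
      (hmap.isClosedMap).isQuotientMap hmap (surjective_id.prodMap hQs)
    rw [hqQ.continuous_iff]
    have : N ∘ Prod.map (fun t : unitInterval => t) Q = L := by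
      funext p
      exact hNQ p.1 p.2
    rw [this]
    exact hLc
  apply hα
  refine ⟨{ toFun := fun p => N p
            continuous_toFun := hNc
            map_zero_left := ?_
            map_one_left := ?_
            prop' := ?_ }⟩
  · intro z
    obtain ⟨x, rfl⟩ := hQs z
    show N (0, Q x) = α.toCM (Q x)
    rw [hNQ, hL0 x]
  · intro z
    show N (1, z) = (PtMap.const (pSphere 14) qS3).toCM z
    rw [hN]
    show L (1, surjInv hQs z) = _
    rw [hL1]
    rfl
  · intro t x hx
    have hx' : x = (pSphere 14).pt := hx
    subst hx'
    have hQpt : Q (qS3.pt, (pSphere 11).pt) = (pSphere 14).pt := by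
      rw [hQ]
      show e (Quot.mk smashRel (qS3.pt, (pSphere 11).pt)) = _
      exact he
    show N (t, (pSphere 14).pt) = α.toCM (pSphere 14).pt
    rw [α.map_pt, ← hQpt, hNQ]
    exact hwedge t _ (Or.inl rfl)

end Key1
section Key2

open Function

private abbrev SPc (k : ℕ) : Type :=
  Metric.sphere (0 : EuclideanSpace ℝ (Fin (k + 1 + 1))) (1 : ℝ)

private def ev0 (k : ℕ) : EuclideanSpace ℝ (Fin (k + 1 + 1)) := EuclideanSpace.single 0 1

private def ev1 (k : ℕ) : EuclideanSpace ℝ (Fin (k + 1 + 1)) := EuclideanSpace.single 1 1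

private def basePt (k : ℕ) : SPc k :=
  ⟨EuclideanSpace.single 0 1, by simp [EuclideanSpace.norm_single]⟩

private theorem basePt_def (k : ℕ) : basePt k = (pSphere (k + 1)).pt := rfl

private theorem norm_ev0 (k : ℕ) : ‖ev0 k‖ = 1 := by
  simp [ev0, EuclideanSpace.norm_single]

private theorem zero_ne_one_fin (k : ℕ) : (0 : Fin (k + 1 + 1)) ≠ 1 := by
  intro h
  have h2 := congrArg Fin.val h
  rw [Fin.val_zero, Fin.val_one'] at h2
  rw [Nat.mod_eq_of_lt (by omega)] at h2
  omega

private def phiF (k : ℕ) (x : SPc k) : ℝ :=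
  min 1 (max 0 (-4 * (x : EuclideanSpace ℝ (Fin (k + 1 + 1))) 0 - 1))

private def psiF (k : ℕ) (x : SPc k) : ℝ :=
  min 1 (max 0 (4 * (x : EuclideanSpace ℝ (Fin (k + 1 + 1))) 0 + 3))

private theorem phiF_nonneg (k : ℕ) (x : SPc k) : 0 ≤ phiF k x :=
  le_min zero_le_one (le_max_left 0 _)

private theorem phiF_le_one (k : ℕ) (x : SPc k) : phiF k x ≤ 1 := min_le_left _ _

private theorem psiF_nonneg (k : ℕ) (x : SPc k) : 0 ≤ psiF k x :=
  le_min zero_le_one (le_max_left 0 _)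

private theorem psiF_le_one (k : ℕ) (x : SPc k) : psiF k x ≤ 1 := min_le_left _ _

private theorem phiF_e0 (k : ℕ) (x : SPc k)
    (hx : (x : EuclideanSpace ℝ (Fin (k + 1 + 1))) = ev0 k) : phiF k x = 0 := by
  unfold phiF
  rw [hx]
  rw [show (ev0 k) 0 = 1 by simp [ev0, EuclideanSpace.single_apply]]
  norm_num

private theorem psiF_neg_e0 (k : ℕ) (x : SPc k)
    (hx : (x : EuclideanSpace ℝ (Fin (k + 1 + 1))) = -(ev0 k)) : psiF k x = 0 := by
  unfold psiF
  rw [hx]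
  rw [show (-(ev0 k)) 0 = -1 by simp [ev0, PiLp.neg_apply, EuclideanSpace.single_apply]]
  norm_num

private theorem cover (k : ℕ) (x : SPc k) : phiF k x = 1 ∨ psiF k x = 1 := by
  rcases le_or_gt ((x : EuclideanSpace ℝ (Fin (k + 1 + 1))) 0) (-(1 / 2) : ℝ) with h | h
  · left
    unfold phiF
    rw [max_eq_right (by linarith), min_eq_left (by linarith)]
  · right
    unfold psiF
    rw [max_eq_right (by linarith), min_eq_left (by linarith)]

private def vsubF (k : ℕ) (s : ℝ) (x : SPc k) : EuclideanSpace ℝ (Fin (k + 1 + 1)) :=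
  (1 - s * phiF k x) • (x : EuclideanSpace ℝ (Fin (k + 1 + 1)))
    + (s * phiF k x) • (-(ev0 k))

private def vaddF (k : ℕ) (s : ℝ) (x : SPc k) : EuclideanSpace ℝ (Fin (k + 1 + 1)) :=
  (1 - s * psiF k x) • (x : EuclideanSpace ℝ (Fin (k + 1 + 1)))
    + (s * psiF k x) • (ev0 k)

private theorem norm_coe_sphere (k : ℕ) (x : SPc k) :
    ‖(x : EuclideanSpace ℝ (Fin (k + 1 + 1)))‖ = 1 :=
  mem_sphere_zero_iff_norm.1 x.2

private theorem smul_bound (k : ℕ) {s : ℝ} (h0 : 0 ≤ s) (h1 : s ≤ 1) (x : SPc k)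
    {c : ℝ} (hc0 : 0 ≤ c) (hc1 : c ≤ 1) : 0 ≤ s * c ∧ s * c ≤ 1 :=
  ⟨mul_nonneg h0 hc0, by nlinarith⟩

private theorem vsubF_ne (k : ℕ) {s : ℝ} (h0 : 0 ≤ s) (h1 : s ≤ 1) (x : SPc k) :
    vsubF k s x ≠ 0 := by
  have hb := smul_bound k h0 h1 x (phiF_nonneg k x) (phiF_le_one k x)
  apply seg_ne_zero (norm_coe_sphere k x) (by rw [norm_neg]; exact norm_ev0 k) hb.1 hb.2
  intro hx
  rw [neg_neg] at hx
  rw [phiF_e0 k x hx, mul_zero]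

private theorem vaddF_ne (k : ℕ) {s : ℝ} (h0 : 0 ≤ s) (h1 : s ≤ 1) (x : SPc k) :
    vaddF k s x ≠ 0 := by
  have hb := smul_bound k h0 h1 x (psiF_nonneg k x) (psiF_le_one k x)
  apply seg_ne_zero (norm_coe_sphere k x) (norm_ev0 k) hb.1 hb.2
  intro hx
  rw [psiF_neg_e0 k x hx, mul_zero]

open scoped Classical in
private def MF (k : ℕ) (s : ℝ) (x : SPc k) : SPc k :=
  if h : vsubF k s x = 0 then basePt k
  else ⟨‖vsubF k s x‖⁻¹ • vsubF k s x, mem_sphere_normalize h⟩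

open scoped Classical in
private def LF (k : ℕ) (s : ℝ) (x : SPc k) : SPc k :=
  if h : vaddF k s x = 0 then basePt k
  else ⟨‖vaddF k s x‖⁻¹ • vaddF k s x, mem_sphere_normalize h⟩

private theorem MF_eq (k : ℕ) {s : ℝ} (h0 : 0 ≤ s) (h1 : s ≤ 1) (x : SPc k) :
    MF k s x
      = ⟨‖vsubF k s x‖⁻¹ • vsubF k s x, mem_sphere_normalize (vsubF_ne k h0 h1 x)⟩ := by
  unfold MF
  exact dif_neg (vsubF_ne k h0 h1 x)

private theorem LF_eq (k : ℕ) {s : ℝ} (h0 : 0 ≤ s) (h1 : s ≤ 1) (x : SPc k) :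
    LF k s x
      = ⟨‖vaddF k s x‖⁻¹ • vaddF k s x, mem_sphere_normalize (vaddF_ne k h0 h1 x)⟩ := by
  unfold LF
  exact dif_neg (vaddF_ne k h0 h1 x)

private theorem normalize_self {n : ℕ} {v : EuclideanSpace ℝ (Fin n)} (hv : ‖v‖ = 1) :
    ‖v‖⁻¹ • v = v := by rw [hv, inv_one, one_smul]

private theorem MF_zero (k : ℕ) (x : SPc k) : MF k 0 x = x := by
  rw [MF_eq k le_rfl zero_le_one x]
  apply Subtype.ext
  show ‖vsubF k 0 x‖⁻¹ • vsubF k 0 x = _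
  have h : vsubF k 0 x = (x : EuclideanSpace ℝ (Fin (k + 1 + 1))) := by
    unfold vsubF
    rw [zero_mul, sub_zero, one_smul, zero_smul, add_zero]
  rw [h, normalize_self (norm_coe_sphere k x)]

private theorem LF_zero (k : ℕ) (x : SPc k) : LF k 0 x = x := by
  rw [LF_eq k le_rfl zero_le_one x]
  apply Subtype.ext
  show ‖vaddF k 0 x‖⁻¹ • vaddF k 0 x = _
  have h : vaddF k 0 x = (x : EuclideanSpace ℝ (Fin (k + 1 + 1))) := by
    unfold vaddF
    rw [zero_mul, sub_zero, one_smul, zero_smul, add_zero]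
  rw [h, normalize_self (norm_coe_sphere k x)]

private theorem LF_base (k : ℕ) {s : ℝ} (h0 : 0 ≤ s) (h1 : s ≤ 1) :
    LF k s (basePt k) = basePt k := by
  rw [LF_eq k h0 h1]
  apply Subtype.ext
  show ‖vaddF k s (basePt k)‖⁻¹ • vaddF k s (basePt k) = _
  have h : vaddF k s (basePt k) = ev0 k := by
    unfold vaddF
    show (1 - s * psiF k (basePt k)) • (ev0 k) + (s * psiF k (basePt k)) • (ev0 k) = ev0 k
    rw [← add_smul, sub_add_cancel, one_smul]
  rw [h, normalize_self (norm_ev0 k)]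
  rfl

private theorem LF_one (k : ℕ) (x : SPc k)
    (h : psiF k x = 1) : LF k 1 x = basePt k := by
  rw [LF_eq k zero_le_one le_rfl]
  apply Subtype.ext
  show ‖vaddF k 1 x‖⁻¹ • vaddF k 1 x = _
  have h2 : vaddF k 1 x = ev0 k := by
    unfold vaddF
    rw [h, one_mul, sub_self, zero_smul, one_smul, zero_add]
  rw [h2, normalize_self (norm_ev0 k)]
  rfl

private def rhoF (k : ℕ) (s : ℝ) : SPc k :=
  ⟨Real.cos (Real.pi * s) • EuclideanSpace.single 0 (1 : ℝ)
      + Real.sin (Real.pi * s) • EuclideanSpace.single 1 (1 : ℝ),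
    norm_single_combo (zero_ne_one_fin k) _ _ (Real.cos_sq_add_sin_sq _)⟩

private theorem rho_zero (k : ℕ) : rhoF k 0 = basePt k := by
  apply Subtype.ext
  show Real.cos (Real.pi * 0) • EuclideanSpace.single 0 (1 : ℝ)
      + Real.sin (Real.pi * 0) • EuclideanSpace.single 1 (1 : ℝ) = _
  rw [mul_zero, Real.cos_zero, Real.sin_zero, one_smul, zero_smul, add_zero]
  rfl

private theorem rho_one_val (k : ℕ) :
    ((rhoF k 1 : SPc k) : EuclideanSpace ℝ (Fin (k + 1 + 1))) = -(ev0 k) := by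
  show Real.cos (Real.pi * 1) • EuclideanSpace.single 0 (1 : ℝ)
      + Real.sin (Real.pi * 1) • EuclideanSpace.single 1 (1 : ℝ) = _
  rw [mul_one, Real.cos_pi, Real.sin_pi, zero_smul, add_zero, neg_smul, one_smul]
  rfl

private theorem MF_one (k : ℕ) (x : SPc k)
    (h : phiF k x = 1) : MF k 1 x = rhoF k 1 := by
  rw [MF_eq k zero_le_one le_rfl]
  apply Subtype.ext
  show ‖vsubF k 1 x‖⁻¹ • vsubF k 1 x = _
  have h2 : vsubF k 1 x = -(ev0 k) := by
    unfold vsubF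
    rw [h, one_mul, sub_self, zero_smul, one_smul, zero_add]
  rw [h2, normalize_self (by rw [norm_neg]; exact norm_ev0 k), rho_one_val]

private theorem coordF_cont (k : ℕ) :
    Continuous (fun x : SPc k => (x : EuclideanSpace ℝ (Fin (k + 1 + 1))) 0) :=
  (continuous_apply (0 : Fin (k + 1 + 1))).comp ((PiLp.continuous_ofLp 2 _).comp continuous_subtype_val)

private theorem phiF_cont (k : ℕ) : Continuous (phiF k) := by
  unfold phiF
  exact continuous_const.min
    (continuous_const.max ((continuous_const.mul (coordF_cont k)).sub continuous_const))

private theorem psiF_cont (k : ℕ) : Continuous (psiF k) := by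
  unfold psiF
  exact continuous_const.min
    (continuous_const.max ((continuous_const.mul (coordF_cont k)).add continuous_const))

private theorem rhoF_cont (k : ℕ) : Continuous (rhoF k) := by
  apply Continuous.subtype_mk
  exact ((Real.continuous_cos.comp (continuous_const.mul continuous_id)).smul
      continuous_const).add
    ((Real.continuous_sin.comp (continuous_const.mul continuous_id)).smul continuous_const)

private theorem MF_cont (k : ℕ) {X : Type} [TopologicalSpace X] (f : X → ℝ) (g : X → SPc k)
    (hf : Continuous f) (hg : Continuous g) (h : ∀ x, 0 ≤ f x ∧ f x ≤ 1) :
    Continuous (fun x => MF k (f x) (g x)) := by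
  have hphi : Continuous fun x => phiF k (g x) := (phiF_cont k).comp hg
  have hval : Continuous fun x => (g x : EuclideanSpace ℝ (Fin (k + 1 + 1))) :=
    continuous_subtype_val.comp hg
  have hv : Continuous fun x => vsubF k (f x) (g x) := by
    unfold vsubF
    exact ((continuous_const.sub (hf.mul hphi)).smul hval).add
      ((hf.mul hphi).smul continuous_const)
  have hc2 : Continuous fun x => (⟨‖vsubF k (f x) (g x)‖⁻¹ • vsubF k (f x) (g x),
      mem_sphere_normalize (vsubF_ne k (h x).1 (h x).2 (g x))⟩ : SPc k) :=
    Continuous.subtype_mk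
      ((hv.norm.inv₀ fun x => norm_ne_zero_iff.2 (vsubF_ne k (h x).1 (h x).2 (g x))).smul hv) _
  exact hc2.congr fun x => (MF_eq k (h x).1 (h x).2 (g x)).symm

private theorem LF_cont (k : ℕ) {X : Type} [TopologicalSpace X] (f : X → ℝ) (g : X → SPc k)
    (hf : Continuous f) (hg : Continuous g) (h : ∀ x, 0 ≤ f x ∧ f x ≤ 1) :
    Continuous (fun x => LF k (f x) (g x)) := by
  have hpsi : Continuous fun x => psiF k (g x) := (psiF_cont k).comp hg
  have hval : Continuous fun x => (g x : EuclideanSpace ℝ (Fin (k + 1 + 1))) :=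
    continuous_subtype_val.comp hg
  have hv : Continuous fun x => vaddF k (f x) (g x) := by
    unfold vaddF
    exact ((continuous_const.sub (hf.mul hpsi)).smul hval).add
      ((hf.mul hpsi).smul continuous_const)
  have hc2 : Continuous fun x => (⟨‖vaddF k (f x) (g x)‖⁻¹ • vaddF k (f x) (g x),
      mem_sphere_normalize (vaddF_ne k (h x).1 (h x).2 (g x))⟩ : SPc k) :=
    Continuous.subtype_mk
      ((hv.norm.inv₀ fun x => norm_ne_zero_iff.2 (vaddF_ne k (h x).1 (h x).2 (g x))).smul hv) _
  exact hc2.congr fun x => (LF_eq k (h x).1 (h x).2 (g x)).symm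

set_option maxHeartbeats 1000000 in
set_option synthInstance.maxHeartbeats 400000 in
theorem key2 (k : ℕ) {Z : PtSpace} (w : PtMap (ptSmash qS3 (pSphere 11)) Z)
    (a : PtMap (pSphere (k + 1)) qS3) (b : PtMap (pSphere (k + 1)) (pSphere 11))
    (f : PtMap (pSphere (k + 1)) Z)
    (hf : ∀ x : (pSphere (k + 1)).carrier,
      f.toCM x = w.toCM (Quot.mk smashRel (a.toCM x, b.toCM x))) :
    PtNullhomotopic f := by
  have hs1 : (0 : ℝ) ≤ 1 ∧ (1 : ℝ) ≤ 1 := ⟨zero_le_one, le_refl 1⟩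
  have hb1 : ∀ s : qS3.carrier, w.toCM (Quot.mk smashRel (s, (pSphere 11).pt)) = Z.pt :=
    fun s => by rw [quot_wedge_right, w.map_pt]
  have hb2 : ∀ y : (pSphere 11).carrier,
      w.toCM (Quot.mk smashRel (qS3.pt, y)) = Z.pt :=
    fun y => by rw [quot_wedge_left, w.map_pt]
  have hM1 : Continuous fun x : SPc k => MF k 1 x :=
    MF_cont k (fun _ => 1) id continuous_const continuous_id fun _ => hs1
  have hL1 : Continuous fun x : SPc k => LF k 1 x :=
    LF_cont k (fun _ => 1) id continuous_const continuous_id fun _ => hs1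
  -- the intermediate map
  have hf1pt : w.toCM (Quot.mk smashRel
      (a.toCM (MF k 1 ((pSphere (k + 1)).pt)),
        b.toCM (LF k 1 ((pSphere (k + 1)).pt)))) = Z.pt := by
    rw [← basePt_def, LF_base k zero_le_one le_rfl, basePt_def, b.map_pt]
    exact hb1 _
  set f1 : PtMap (pSphere (k + 1)) Z :=
    ⟨⟨fun x => w.toCM (Quot.mk smashRel (a.toCM (MF k 1 x), b.toCM (LF k 1 x))),
      w.toCM.continuous.comp (continuous_quot_mk.comp
        ((a.toCM.continuous.comp hM1).prodMk (b.toCM.continuous.comp hL1)))⟩,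
      hf1pt⟩ with hf1
  have step1 : PtHomotopic f f1 := by
    have hMc : Continuous fun p : unitInterval × SPc k =>
        MF k (p.1 : ℝ) p.2 :=
      MF_cont k (fun p => (p.1 : ℝ)) Prod.snd
        (continuous_subtype_val.comp continuous_fst) continuous_snd
        fun p => ⟨unitInterval.nonneg p.1, unitInterval.le_one p.1⟩
    have hLc : Continuous fun p : unitInterval × SPc k =>
        LF k (p.1 : ℝ) p.2 :=
      LF_cont k (fun p => (p.1 : ℝ)) Prod.snd
        (continuous_subtype_val.comp continuous_fst) continuous_snd
        fun p => ⟨unitInterval.nonneg p.1, unitInterval.le_one p.1⟩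
    refine ⟨{ toFun := fun p => w.toCM (Quot.mk smashRel
                (a.toCM (MF k (p.1 : ℝ) p.2),
                  b.toCM (LF k (p.1 : ℝ) p.2)))
              continuous_toFun := w.toCM.continuous.comp (continuous_quot_mk.comp
                ((a.toCM.continuous.comp hMc).prodMk (b.toCM.continuous.comp hLc)))
              map_zero_left := ?_
              map_one_left := ?_
              prop' := ?_ }⟩
    · intro x
      show w.toCM (Quot.mk smashRel
          (a.toCM (MF k ((0 : unitInterval) : ℝ) x),
            b.toCM (LF k ((0 : unitInterval) : ℝ) x))) = f.toCM x
      rw [show ((0 : unitInterval) : ℝ) = 0 from rfl, MF_zero k x, LF_zero k x]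
      exact (hf x).symm
    · intro x
      rfl
    · intro t x hx
      have hx' : x = (pSphere (k + 1)).pt := hx
      subst hx'
      show w.toCM (Quot.mk smashRel
          (a.toCM (MF k (t : ℝ) ((pSphere (k + 1)).pt)),
            b.toCM (LF k (t : ℝ) ((pSphere (k + 1)).pt)))) = f.toCM (pSphere (k + 1)).pt
      rw [f.map_pt, ← basePt_def, LF_base k t.2.1 t.2.2, basePt_def, b.map_pt]
      exact hb1 _
  have step2 : PtHomotopic f1 (PtMap.const (pSphere (k + 1)) Z) := by
    have hrc : Continuous fun p : unitInterval × SPc k =>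
        a.toCM (rhoF k ((p.1 : ℝ) * phiF k p.2)) :=
      a.toCM.continuous.comp ((rhoF_cont k).comp
        ((continuous_subtype_val.comp continuous_fst).mul ((phiF_cont k).comp continuous_snd)))
    refine ⟨{ toFun := fun p => w.toCM (Quot.mk smashRel
                (a.toCM (MF k 1 p.2) * (a.toCM (rhoF k ((p.1 : ℝ) * phiF k p.2)))⁻¹,
                  b.toCM (LF k 1 p.2)))
              continuous_toFun := w.toCM.continuous.comp (continuous_quot_mk.comp
                (((a.toCM.continuous.comp (hM1.comp continuous_snd)).mul hrc.inv).prodMk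
                  (b.toCM.continuous.comp (hL1.comp continuous_snd))))
              map_zero_left := ?_
              map_one_left := ?_
              prop' := ?_ }⟩
    · intro x
      show w.toCM (Quot.mk smashRel
          (a.toCM (MF k 1 x)
              * (a.toCM (rhoF k (((0 : unitInterval) : ℝ) * phiF k x)))⁻¹,
            b.toCM (LF k 1 x))) = f1.toCM x
      rw [show ((0 : unitInterval) : ℝ) = 0 from rfl, zero_mul, rho_zero, basePt_def,
        a.map_pt, show (qS3.pt : qS3.carrier) = 1 from rfl, inv_one, mul_one]
      rfl
    · intro x
      show w.toCM (Quot.mk smashRel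
          (a.toCM (MF k 1 x)
              * (a.toCM (rhoF k (((1 : unitInterval) : ℝ) * phiF k x)))⁻¹,
            b.toCM (LF k 1 x))) = (PtMap.const (pSphere (k + 1)) Z).toCM x
      rcases cover k x with hphi | hpsi
      · rw [show ((1 : unitInterval) : ℝ) = 1 from rfl, one_mul, hphi,
          MF_one k x hphi, mul_inv_cancel,
          show (1 : qS3.carrier) = qS3.pt from rfl, hb2]
        rfl
      · rw [LF_one k x hpsi, basePt_def, b.map_pt, hb1]
        rfl
    · intro t x hx
      have hx' : x = (pSphere (k + 1)).pt := hx
      subst hx'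
      show w.toCM (Quot.mk smashRel
          (a.toCM (MF k 1 ((pSphere (k + 1)).pt))
              * (a.toCM (rhoF k ((t : ℝ) * phiF k ((pSphere (k + 1)).pt))))⁻¹,
            b.toCM (LF k 1 ((pSphere (k + 1)).pt)))) = f1.toCM (pSphere (k + 1)).pt
      rw [f1.map_pt]
      rw [← basePt_def, LF_base k zero_le_one le_rfl, basePt_def, b.map_pt]
      exact hb1 _
  exact step1.trans step2

end Key2
/-! ### STATEMENT 15
If `α : S¹⁴ → S³` is essential of order 7, then the composite
`S³ × S⁷ × S¹¹ → S³ × S¹¹ → S³ ∧ S¹¹ ≃ S¹⁴ → S³ → S³ × S⁷ × S¹¹`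
is essential and induces the trivial homomorphism on all homotopy groups;
in particular `𝒵^∞(S³ × S⁷ × S¹¹)` is nontrivial. -/
theorem stmt_15 (α : PtMap (pSphere 14) qS3)
    (hα₁ : ¬ PtNullhomotopic α) (hα₂ : PtNullhomotopic (α.npow 7))
    (e : (ptSmash qS3 (pSphere 11)).carrier ≃ₜ (pSphere 14).carrier)
    (he : e (ptSmash qS3 (pSphere 11)).pt = (pSphere 14).pt) :
    ¬ PtNullhomotopic (inclS3.comp (α.comp
        ((⟨(⟨e, e.continuous⟩ :
            C((ptSmash qS3 (pSphere 11)).carrier, (pSphere 14).carrier)).comp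
          (ptSmashProj qS3 (pSphere 11)).toCM, he⟩ :
            PtMap (PtSpace.prod qS3 (pSphere 11)) (pSphere 14)).comp projForget))) ∧
    (inclS3.comp (α.comp
        ((⟨(⟨e, e.continuous⟩ :
            C((ptSmash qS3 (pSphere 11)).carrier, (pSphere 14).carrier)).comp
          (ptSmashProj qS3 (pSphere 11)).toCM, he⟩ :
            PtMap (PtSpace.prod qS3 (pSphere 11)) (pSphere 14)).comp projForget)))
      ∈ ZSet ⊤ X15 := by

  constructor
  · exact key1 α e he hα₁ fun x => rfl
  · intro i hi _ g
    obtain ⟨k, rfl⟩ : ∃ k, i = k + 1 := ⟨i - 1, by omega⟩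
    exact key2 k
      (inclS3.comp (α.comp
        (⟨(⟨e, e.continuous⟩ :
          C((ptSmash qS3 (pSphere 11)).carrier, (pSphere 14).carrier)), he⟩ :
          PtMap (ptSmash qS3 (pSphere 11)) (pSphere 14))))
      ⟨⟨fun x => (g.toCM x).1, continuous_fst.comp g.toCM.continuous⟩, by
        show (g.toCM (pSphere (k + 1)).pt).1 = qS3.pt
        rw [g.map_pt]
        rfl⟩
      ⟨⟨fun x => (g.toCM x).2.2,
        (continuous_snd.comp continuous_snd).comp g.toCM.continuous⟩, by
        show (g.toCM (pSphere (k + 1)).pt).2.2 = (pSphere 11).pt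
        rw [g.map_pt]
        rfl⟩
      _ (fun x => rfl)

end
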